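/- Let $Q_2 \in \mathbb{R}^{n\times(n-m)}$ satisfy $Q_2^\top Q_2 = I_{n-m}$, let $Z \in \mathbb{R}^{n\times l}$, $X \in \mathbb{R}^{n\times j}$, and let $W \in \mathbb{R}^{l\times j}$ have full column rank $j$ (with $j \le l$). Then the matrix $M = \begin{pmatrix} Q_2^\top A Z & -Q_2^\top & -Q_2^\top X \\ W^\top & 0 & 0 \end{pmatrix}$ has full row rank $(n-m)+j$, for any $A \in \mathbb{R}^{n\times n}$; equivalently, $\dim \mathcal{N}(M) = m + l$. -/

import Mathlib

open Matrix

lemma isUnit_of_rank_eq_card {j : ℕ} (G : Matrix (Fin j) (Fin j) ℝ)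
    (h : G.rank = j) : IsUnit G := by
  rw [← Matrix.mulVec_surjective_iff_isUnit]
  have hrange : LinearMap.range G.mulVecLin = ⊤ := by
    apply Submodule.eq_top_of_finrank_eq
    rw [← Matrix.rank, h, Module.finrank_pi]
    simp
  intro y
  have := hrange ▸ Submodule.mem_top (R := ℝ) (x := y)
  obtain ⟨x, hx⟩ := this
  exact ⟨x, hx⟩

/-- the matrix `M = [[Q₂ᵀAZ, -Q₂ᵀ, -Q₂ᵀX], [Wᵀ, 0, 0]]` has full
row rank `(n - m) + j` (here `k = n - m`, `W` has full column rank `j ≤ l`). -/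
theorem stmt15 {n m k l j : ℕ} (hn : m + k = n) (hjl : j ≤ l)
    (A : Matrix (Fin n) (Fin n) ℝ)
    (Q2 : Matrix (Fin n) (Fin k) ℝ) (hQ2 : Q2ᵀ * Q2 = 1)
    (Z : Matrix (Fin n) (Fin l) ℝ) (X : Matrix (Fin n) (Fin j) ℝ)
    (W : Matrix (Fin l) (Fin j) ℝ) (hW : W.rank = j) :
    (Matrix.fromBlocks (Q2ᵀ * A * Z) (fromCols (-Q2ᵀ) (-(Q2ᵀ * X)))
        Wᵀ 0).rank = k + j := by
  set G : Matrix (Fin j) (Fin j) ℝ := Wᵀ * W with hGdef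
  have hG : IsUnit G := by
    apply isUnit_of_rank_eq_card
    rw [hGdef, Matrix.rank_transpose_mul_self, hW]
  have hGinv : G * G⁻¹ = 1 :=
    Matrix.mul_nonsing_inv _ ((Matrix.isUnit_iff_isUnit_det _).mp hG)
  set P : Matrix (Fin l) (Fin j) ℝ := W * G⁻¹ with hPdef
  set B : Matrix (Fin k) (Fin l) ℝ := Q2ᵀ * A * Z with hBdef
  set M := Matrix.fromBlocks B (fromCols (-Q2ᵀ) (-(Q2ᵀ * X))) Wᵀ (0 : Matrix (Fin j) (Fin n ⊕ Fin j) ℝ)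
  set N : Matrix (Fin l ⊕ (Fin n ⊕ Fin j)) (Fin k ⊕ Fin j) ℝ :=
    Matrix.fromBlocks 0 P (fromRows (-Q2) 0) (fromRows (Q2 * (B * P)) 0)
  have hMN : M * N = 1 := by
    show Matrix.fromBlocks B (fromCols (-Q2ᵀ) (-(Q2ᵀ * X))) Wᵀ 0 * N = 1
    rw [show (1 : Matrix (Fin k ⊕ Fin j) (Fin k ⊕ Fin j) ℝ) =
      Matrix.fromBlocks 1 0 0 1 from (Matrix.fromBlocks_one).symm]
    rw [Matrix.fromBlocks_multiply, Matrix.fromCols_mul_fromRows,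
      Matrix.fromCols_mul_fromRows]
    simp [hQ2]
    rw [← Matrix.mul_assoc Q2ᵀ Q2, hQ2, Matrix.one_mul, add_neg_cancel,
      hPdef, ← Matrix.mul_assoc, ← hGdef, hGinv]
    exact Matrix.fromBlocks_one
  refine le_antisymm ?_ ?_
  · calc M.rank ≤ Fintype.card (Fin k ⊕ Fin j) := Matrix.rank_le_card_height M
    _ = k + j := by simp
  · calc (k + j : ℕ) = Fintype.card (Fin k ⊕ Fin j) := by simp
    _ = (1 : Matrix (Fin k ⊕ Fin j) (Fin k ⊕ Fin j) ℝ).rank := Matrix.rank_one.symm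
    _ = (M * N).rank := by rw [hMN]
    _ ≤ M.rank := Matrix.rank_mul_le_left M N
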